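/- For every α ∈ (0,2), the class 𝒮₁(α) is contained in 𝒮₂(α), and the inclusion is strict; in particular, the one-sided measure ν(dx) = x^{-1-α} 𝟙_{(0,1)}(x) dx belongs to 𝒮₂(α) but not to 𝒮₁(α). -/

import Mathlib

open MeasureTheory Filter
open scoped ENNReal NNReal

/-- A Lévy measure on `ℝ`: no mass at `0` and `∫ (x² ∧ 1) ν(dx) < ∞`. -/
def IsLevyMeasure (ν : Measure ℝ) : Prop :=
  ν {0} = 0 ∧ ∫⁻ x, ENNReal.ofReal (min (x ^ 2) 1) ∂ν < ⊤

/-- `∫ (1 - cos(ux)) ν(dx)` as an `ℝ≥0∞`-valued integral. -/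
noncomputable def cosInt (ν : Measure ℝ) (u : ℝ) : ENNReal :=
  ∫⁻ x, ENNReal.ofReal (1 - Real.cos (u * x)) ∂ν

/-- The filter `|u| → ∞`. -/
def absAtTop : Filter ℝ := Filter.comap (fun u : ℝ => |u|) Filter.atTop

/-- The class `𝒮₂(α)`: `0 < liminf_{|u|→∞} |u|^{-α} ∫(1-cos(ux))ν(dx) ≤ limsup < ∞`. -/
noncomputable def MemS2 (α : ℝ) (ν : Measure ℝ) : Prop :=
  0 < Filter.liminf (fun u : ℝ => cosInt ν u / ENNReal.ofReal (|u| ^ α)) absAtTop ∧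
  Filter.limsup (fun u : ℝ => cosInt ν u / ENNReal.ofReal (|u| ^ α)) absAtTop < ⊤

/-- The class `𝒮₁(α)`: `ν = ν₁ + ν₂` with `ν₁` having a density `k(x)/|x|^{α+1}` where `k`
is bounded away from `0` and `∞` near the origin and `k(x)/|x|^α` is monotone on each
half-line, while `ν₂` satisfies `limsup_{|u|→∞} |u|^{-α} ∫(1-cos(ux))ν₂(dx) < ∞`. -/
noncomputable def MemS1 (α : ℝ) (ν : Measure ℝ) : Prop :=
  ∃ (ν₁ ν₂ : Measure ℝ) (k : ℝ → ℝ),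
    IsLevyMeasure ν₁ ∧ IsLevyMeasure ν₂ ∧ ν = ν₁ + ν₂ ∧
    ν₁ = volume.withDensity
      (fun x => if x = 0 then 0 else ENNReal.ofReal (k x / |x| ^ (α + 1))) ∧
    (∃ c C : ℝ, 0 < c ∧ ∀ᶠ x in nhdsWithin 0 {(0 : ℝ)}ᶜ, c ≤ k x ∧ k x ≤ C) ∧
    (∀ x y : ℝ, x ≤ y → y < 0 → k x / |x| ^ α ≤ k y / |y| ^ α) ∧
    (∀ x y : ℝ, 0 < x → x ≤ y → k y / |y| ^ α ≤ k x / |x| ^ α) ∧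
    (∃ C : ℝ, ∀ᶠ u in absAtTop, cosInt ν₂ u ≤ ENNReal.ofReal (C * |u| ^ α))

lemma lint_rpow_Ioc {r a b : ℝ} (h : -1 < r ∨ (r < -1 ∧ 0 < a)) (ha : 0 ≤ a) (hab : a ≤ b) :
    ∫⁻ x in Set.Ioc a b, ENNReal.ofReal (x ^ r) =
      ENNReal.ofReal ((b ^ (r+1) - a ^ (r+1)) / (r+1)) := by
  have hnotmem : r < -1 → (0:ℝ) ∉ Set.uIcc a b := by
    intro hr
    rcases h with h | ⟨_, h0⟩
    · linarith
    · rw [Set.uIcc_of_le hab]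
      intro hmem
      exact absurd hmem.1 (by linarith)
  have hint : IntervalIntegrable (fun x : ℝ => x ^ r) volume a b := by
    rcases h with h | ⟨hr, h0⟩
    · exact intervalIntegral.intervalIntegrable_rpow' h
    · exact intervalIntegral.intervalIntegrable_rpow (Or.inr (hnotmem hr))
  have hfi : IntegrableOn (fun x : ℝ => x ^ r) (Set.Ioc a b) volume :=
    (intervalIntegrable_iff_integrableOn_Ioc_of_le hab).mp hint
  have hnn : 0 ≤ᵐ[volume.restrict (Set.Ioc a b)] fun x : ℝ => x ^ r := by
    filter_upwards [ae_restrict_mem measurableSet_Ioc] with x hx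
    exact Real.rpow_nonneg (le_of_lt (lt_of_le_of_lt ha hx.1)) r
  rw [← ofReal_integral_eq_lintegral_ofReal hfi hnn]
  congr 1
  rw [← intervalIntegral.integral_of_le hab]
  apply integral_rpow
  rcases h with h | ⟨hr, _⟩
  · exact Or.inl h
  · exact Or.inr ⟨by linarith, hnotmem hr⟩

open Real in
lemma lint_const_rpow_Ioc {c r a b : ℝ} (hc : 0 ≤ c) (h : -1 < r ∨ (r < -1 ∧ 0 < a))
    (ha : 0 ≤ a) (hab : a ≤ b) :
    ∫⁻ x in Set.Ioc a b, ENNReal.ofReal (c * x ^ r) =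
      ENNReal.ofReal (c * ((b ^ (r+1) - a ^ (r+1)) / (r+1))) := by
  simp_rw [ENNReal.ofReal_mul hc]
  rw [lintegral_const_mul' _ _ ENNReal.ofReal_ne_top, lint_rpow_Ioc h ha hab]

open Real in
lemma rpow_div_neg {t s α : ℝ} (ht : 0 < t) (hs : 0 < s) :
    (s / t) ^ (-α) = s ^ (-α) * t ^ α := by
  rw [Real.div_rpow hs.le ht.le, Real.rpow_neg ht.le, div_eq_mul_inv, inv_inv]

open Real in
lemma lower_piece {α c δ : ℝ} (hα1 : 0 < α) (hc : 0 < c) (hδ : 0 < δ) (μ : Measure ℝ)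
    (hge : ∀ s : Set ℝ, MeasurableSet s → s ⊆ Set.Ioo 0 δ →
      ∫⁻ x in s, ENNReal.ofReal (c * x ^ (-1 - α)) ≤ μ s) :
    ∃ c' : ℝ, 0 < c' ∧ ∀ u : ℝ, max 1 (2 * π / δ) ≤ |u| →
      ENNReal.ofReal (c' * |u| ^ α) ≤ cosInt μ u := by
  refine ⟨c * (((π/2) ^ (-α) - π ^ (-α)) / α), ?_, ?_⟩
  · have h1 : (π/2) ^ α < π ^ α :=
      Real.rpow_lt_rpow (by positivity) (half_lt_self pi_pos) hα1
    have h2 : π ^ (-α) < (π/2) ^ (-α) := by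
      rw [Real.rpow_neg pi_pos.le, Real.rpow_neg (by positivity)]
      exact inv_strictAnti₀ (by positivity) h1
    have := sub_pos.mpr h2
    positivity
  · intro u hu
    have hu1 : (1:ℝ) ≤ |u| := le_trans (le_max_left _ _) hu
    have hu0 : (0:ℝ) < |u| := by linarith
    set a := (π/2) / |u| with hadef
    set b := π / |u| with hbdef
    have ha : 0 < a := by positivity
    have hab : a ≤ b := by
      rw [hadef, hbdef]
      gcongr
      linarith [pi_pos]
    have hbδ : b < δ := by
      have h2 : 2 * π / δ ≤ |u| := le_trans (le_max_right _ _) hu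
      rw [hbdef, div_lt_iff₀ hu0]
      have : 2 * π / δ * δ ≤ |u| * δ := by
        exact mul_le_mul_of_nonneg_right h2 hδ.le
      rw [div_mul_cancel₀] at this
      · linarith [pi_pos]
      · exact hδ.ne'
    have hsub : Set.Ioc a b ⊆ Set.Ioo 0 δ := by
      intro x hx
      exact ⟨lt_trans ha hx.1, lt_of_le_of_lt hx.2 hbδ⟩
    have step1 : ∫⁻ x in Set.Ioc a b, (1:ℝ≥0∞) ∂μ ≤ cosInt μ u := by
      refine le_trans ?_ (setLIntegral_le_lintegral (μ := μ) (Set.Ioc a b)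
        (fun x => ENNReal.ofReal (1 - Real.cos (u * x))))
      apply lintegral_mono_ae
      filter_upwards [ae_restrict_mem measurableSet_Ioc] with x hx
      have hx0 : 0 < x := lt_trans ha hx.1
      have hcos : Real.cos (u * x) ≤ 0 := by
        rw [← Real.cos_abs, abs_mul]
        apply Real.cos_nonpos_of_pi_div_two_le_of_le
        · calc π/2 = π/2/|u| * |u| := by field_simp
            _ ≤ x * |u| := by
              apply mul_le_mul_of_nonneg_right (le_of_lt hx.1) hu0.le
            _ = |u| * |x| := by rw [abs_of_pos hx0]; ring
        · calc |u| * |x| = x * |u| := by rw [abs_of_pos hx0]; ring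
            _ ≤ π/|u| * |u| := mul_le_mul_of_nonneg_right hx.2 hu0.le
            _ = π := by field_simp
            _ ≤ π + π/2 := by linarith [pi_pos]
      rw [ENNReal.one_le_ofReal]
      linarith
    have step2 : ∫⁻ x in Set.Ioc a b, ENNReal.ofReal (c * x ^ (-1 - α)) ≤
        ∫⁻ x in Set.Ioc a b, (1:ℝ≥0∞) ∂μ := by
      rw [setLIntegral_one]
      exact hge _ measurableSet_Ioc hsub
    refine le_trans ?_ (le_trans step2 step1)
    rw [lint_const_rpow_Ioc hc.le (Or.inr ⟨by linarith, ha⟩) ha.le hab]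
    apply le_of_eq
    congr 1
    have hr1 : (-1 - α) + 1 = -α := by ring
    have hαne : α ≠ 0 := ne_of_gt hα1
    rw [hr1, hadef, hbdef, rpow_div_neg hu0 pi_pos, rpow_div_neg hu0 (by positivity)]
    rw [div_neg, ← neg_div, neg_sub]
    ring

open Real in
lemma upper_piece {α C δ : ℝ} (hα1 : 0 < α) (hα2 : α < 2) (hC : 0 ≤ C) (hδ : 0 < δ)
    (μ : Measure ℝ)
    (hle : ∀ s : Set ℝ, MeasurableSet s → s ⊆ Set.Ioo 0 δ →
      μ s ≤ ∫⁻ x in s, ENNReal.ofReal (C * x ^ (-1 - α))) :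
    ∃ C' : ℝ, 0 < C' ∧ ∀ u : ℝ, max 1 δ⁻¹ ≤ |u| →
      ∫⁻ x in Set.Ioo 0 δ, ENNReal.ofReal (1 - Real.cos (u * x)) ∂μ ≤
        ENNReal.ofReal (C' * |u| ^ α) := by
  have hα2' : (0:ℝ) < 2 - α := by linarith
  have hG : Measurable fun x : ℝ => ENNReal.ofReal (C * x ^ (-1 - α)) :=
    ((measurable_id.pow_const _).const_mul C).ennreal_ofReal
  refine ⟨C / (2 - α) + 2 * C / α + 1, by positivity, ?_⟩
  intro u hu
  have hu1 : (1:ℝ) ≤ |u| := le_trans (le_max_left _ _) hu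
  have hu0 : (0:ℝ) < |u| := by linarith
  set m := |u|⁻¹ with hmdef
  have hm0 : 0 < m := by positivity
  have hmδ : m ≤ δ := by
    rw [hmdef, inv_le_comm₀ hu0 hδ]
    exact le_trans (le_max_right _ _) hu
  set G := fun x : ℝ => ENNReal.ofReal (C * x ^ (-1 - α)) with hGdef
  set f := fun x : ℝ => ENNReal.ofReal (1 - Real.cos (u * x)) with hfdef
  have hf : Measurable f := by
    apply Measurable.ennreal_ofReal
    exact measurable_const.sub (Real.measurable_cos.comp (measurable_id.const_mul u))
  have hmono : μ.restrict (Set.Ioo 0 δ) ≤ (volume.withDensity G).restrict (Set.Ioo 0 δ) := by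
    refine Measure.le_iff.mpr fun s hs => ?_
    rw [Measure.restrict_apply hs, Measure.restrict_apply hs,
      withDensity_apply _ (hs.inter measurableSet_Ioo)]
    exact hle _ (hs.inter measurableSet_Ioo) Set.inter_subset_right
  have hmabs : m ^ (-α) = |u| ^ α := by
    rw [hmdef, ← Real.rpow_neg_one, ← Real.rpow_mul (abs_nonneg u)]
    norm_num
  have hA : ∫⁻ x in Set.Ioc 0 m, G x * f x ≤ ENNReal.ofReal (C / (2-α) * |u| ^ α) := by
    have step : ∫⁻ x in Set.Ioc 0 m, G x * f x ≤
        ∫⁻ x in Set.Ioc 0 m, ENNReal.ofReal ((C * u^2) * x ^ (1 - α)) := by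
      apply lintegral_mono_ae
      filter_upwards [ae_restrict_mem measurableSet_Ioc] with x hx
      have hx0 : 0 < x := hx.1
      rw [hGdef, hfdef]
      dsimp only
      rw [← ENNReal.ofReal_mul (by positivity)]
      apply ENNReal.ofReal_le_ofReal
      have h1 : 1 - Real.cos (u*x) ≤ (u*x)^2 := by
        have := Real.one_sub_sq_div_two_le_cos (x := u*x)
        nlinarith [sq_nonneg (u*x)]
      calc C * x ^ (-1-α) * (1 - Real.cos (u*x)) ≤ C * x ^ (-1-α) * (u*x)^2 := by
            apply mul_le_mul_of_nonneg_left h1 (by positivity)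
        _ = (C * u^2) * (x ^ (-1-α) * x ^ ((2:ℕ):ℝ)) := by
            rw [Real.rpow_natCast]; ring
        _ = (C * u^2) * x ^ (1-α) := by
            rw [← Real.rpow_add hx0, show (-1-α + ((2:ℕ):ℝ)) = 1-α by push_cast; ring]
    rw [lint_const_rpow_Ioc (by positivity) (Or.inl (by linarith)) le_rfl hm0.le] at step
    refine le_trans step (le_of_eq ?_)
    congr 1
    have h2 : (1-α) + 1 = 2 - α := by ring
    rw [h2, Real.zero_rpow (ne_of_gt hα2'), sub_zero]
    have hm : m ^ (2-α) = |u| ^ (α - 2) := by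
      rw [hmdef, ← Real.rpow_neg_one, ← Real.rpow_mul (abs_nonneg u)]
      norm_num
    rw [hm, show C * u ^ 2 * (|u| ^ (α-2) / (2-α))
        = C / (2-α) * (|u| ^ ((2:ℕ):ℝ) * |u| ^ (α-2)) by
          rw [Real.rpow_natCast, sq_abs]; ring,
      ← Real.rpow_add hu0, show ((2:ℕ):ℝ) + (α - 2) = α by push_cast; ring]
  have hB : ∫⁻ x in Set.Ioc m δ, G x * f x ≤ ENNReal.ofReal (2 * C / α * |u| ^ α) := by
    have step : ∫⁻ x in Set.Ioc m δ, G x * f x ≤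
        ∫⁻ x in Set.Ioc m δ, ENNReal.ofReal ((2 * C) * x ^ (-1 - α)) := by
      apply lintegral_mono_ae
      filter_upwards [ae_restrict_mem measurableSet_Ioc] with x hx
      have hx0 : 0 < x := lt_trans hm0 hx.1
      rw [hGdef, hfdef]
      dsimp only
      rw [← ENNReal.ofReal_mul (by positivity)]
      apply ENNReal.ofReal_le_ofReal
      have h1 : 1 - Real.cos (u*x) ≤ 2 := by
        have := Real.neg_one_le_cos (u*x)
        linarith
      calc C * x ^ (-1-α) * (1 - Real.cos (u*x)) ≤ C * x ^ (-1-α) * 2 := by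
            apply mul_le_mul_of_nonneg_left h1 (by positivity)
        _ = (2*C) * x ^ (-1-α) := by ring
    rw [lint_const_rpow_Ioc (by positivity) (Or.inr ⟨by linarith, hm0⟩) hm0.le hmδ] at step
    refine le_trans step (ENNReal.ofReal_le_ofReal ?_)
    have h2 : (-1-α) + 1 = -α := by ring
    rw [h2, div_neg, ← neg_div, neg_sub, hmabs]
    rw [show 2*C*((|u|^α - δ^(-α))/α) = 2*C/α*|u|^α - 2*C/α*δ^(-α) by ring]
    have : 0 ≤ 2*C/α*δ^(-α) := by positivity
    linarith
  calc ∫⁻ x in Set.Ioo 0 δ, f x ∂μ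
      ≤ ∫⁻ x in Set.Ioo 0 δ, f x ∂(volume.withDensity G) :=
        lintegral_mono' hmono (le_refl f)
    _ = ∫⁻ x in Set.Ioo 0 δ, (G * f) x := by
        rw [restrict_withDensity measurableSet_Ioo,
          lintegral_withDensity_eq_lintegral_mul _ hG hf]
    _ ≤ ∫⁻ x in Set.Ioc 0 m ∪ Set.Ioc m δ, (G * f) x := by
        apply lintegral_mono_set
        intro x hx
        rcases le_or_gt x m with h|h
        · exact Or.inl ⟨hx.1, h⟩
        · exact Or.inr ⟨h, hx.2.le⟩
    _ ≤ (∫⁻ x in Set.Ioc 0 m, (G * f) x) + ∫⁻ x in Set.Ioc m δ, (G * f) x :=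
        lintegral_union_le _ _ _
    _ ≤ ENNReal.ofReal (C / (2-α) * |u| ^ α) + ENNReal.ofReal (2 * C / α * |u| ^ α) :=
        add_le_add hA hB
    _ = ENNReal.ofReal ((C / (2-α) + 2 * C / α) * |u| ^ α) := by
        rw [← ENNReal.ofReal_add (by positivity) (by positivity)]
        ring_nf
    _ ≤ ENNReal.ofReal ((C / (2 - α) + 2 * C / α + 1) * |u| ^ α) := by
        apply ENNReal.ofReal_le_ofReal
        have : (0:ℝ) ≤ |u| ^ α := Real.rpow_nonneg (abs_nonneg u) α
        nlinarith

lemma absAtTop_neBot : absAtTop.NeBot :=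
  Filter.neBot_of_le (Filter.tendsto_iff_comap.mp tendsto_abs_atTop_atTop)

lemma eventually_absAtTop {p : ℝ → Prop} (M : ℝ) (h : ∀ u : ℝ, M ≤ |u| → p u) :
    ∀ᶠ u in absAtTop, p u := by
  rw [absAtTop, Filter.eventually_comap]
  filter_upwards [Filter.eventually_ge_atTop M] with b hb a ha
  exact h a (ha ▸ hb)

lemma memS2_of_bounds {α : ℝ} {ν : Measure ℝ}
    (hlo : ∃ c' : ℝ, 0 < c' ∧ ∀ᶠ u in absAtTop, ENNReal.ofReal (c' * |u| ^ α) ≤ cosInt ν u)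
    (hhi : ∃ E : ℝ≥0∞, E ≠ ⊤ ∧ ∀ᶠ u in absAtTop, cosInt ν u ≤ E * ENNReal.ofReal (|u| ^ α)) :
    MemS2 α ν := by
  obtain ⟨c', hc', hlo⟩ := hlo
  obtain ⟨E, hE, hhi⟩ := hhi
  have h1 : ∀ᶠ u in absAtTop, (1:ℝ) ≤ |u| := eventually_absAtTop 1 (fun u hu => hu)
  constructor
  · have hev : ∀ᶠ u in absAtTop,
        ENNReal.ofReal c' ≤ cosInt ν u / ENNReal.ofReal (|u| ^ α) := by
      filter_upwards [hlo, h1] with u hu hu1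
      have hb0 : ENNReal.ofReal (|u| ^ α) ≠ 0 := by
        rw [Ne, ENNReal.ofReal_eq_zero, not_le]
        exact Real.rpow_pos_of_pos (by linarith) α
      rw [ENNReal.le_div_iff_mul_le (Or.inl hb0) (Or.inl ENNReal.ofReal_ne_top),
        ← ENNReal.ofReal_mul (le_of_lt hc')]
      exact hu
    refine lt_of_lt_of_le ?_ (Filter.le_liminf_of_le (by isBoundedDefault) hev)
    simpa using hc'
  · have hev : ∀ᶠ u in absAtTop, cosInt ν u / ENNReal.ofReal (|u| ^ α) ≤ E := by
      filter_upwards [hhi] with u hu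
      exact ENNReal.div_le_of_le_mul hu
    exact lt_of_le_of_lt (Filter.limsup_le_of_le (by isBoundedDefault) hev)
      (lt_top_iff_ne_top.mpr hE)

lemma lintegral_map_neg (μ : Measure ℝ) {G : ℝ → ℝ≥0∞} (hG : Measurable G) {s : Set ℝ}
    (hs : MeasurableSet s) :
    ∫⁻ x in s, G x ∂(Measure.map (fun x : ℝ => -x) μ) =
      ∫⁻ x in (fun x : ℝ => -x) ⁻¹' s, G (-x) ∂μ := by
  rw [Measure.restrict_map measurable_neg hs, lintegral_map hG measurable_neg]

lemma levy_tail {μ : Measure ℝ} (hμ : IsLevyMeasure μ) {δ : ℝ} (hδ : 0 < δ) :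
    μ (Set.Ioo (-δ) δ)ᶜ ≠ ⊤ := by
  intro htop
  have hmin : (0:ℝ) < min (δ^2) 1 := by positivity
  have hkey : ENNReal.ofReal (min (δ^2) 1) * μ (Set.Ioo (-δ) δ)ᶜ ≤
      ∫⁻ x, ENNReal.ofReal (min (x^2) 1) ∂μ := by
    rw [← setLIntegral_const]
    refine le_trans ?_ (setLIntegral_le_lintegral (μ := μ) (Set.Ioo (-δ) δ)ᶜ
      (fun x => ENNReal.ofReal (min (x^2) 1)))
    apply lintegral_mono_ae
    filter_upwards [ae_restrict_mem measurableSet_Ioo.compl] with x hx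
    apply ENNReal.ofReal_le_ofReal
    have hxabs : δ ≤ |x| := by
      by_contra h
      push_neg at h
      exact hx ⟨(abs_lt.mp h).1, (abs_lt.mp h).2⟩
    have hsq : δ^2 ≤ x^2 := by
      have := pow_le_pow_left₀ hδ.le hxabs 2
      rwa [sq_abs] at this
    exact min_le_min hsq le_rfl
  have h0 : ENNReal.ofReal (min (δ^2) 1) ≠ 0 := by
    rw [Ne, ENNReal.ofReal_eq_zero, not_le]
    exact hmin
  rw [htop, ENNReal.mul_top h0] at hkey
  exact absurd (lt_of_le_of_lt hkey hμ.2) (lt_irrefl ⊤)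

open Real in
lemma part1 {α : ℝ} (hα1 : 0 < α) (hα2 : α < 2) (ν : Measure ℝ)
    (hS1 : MemS1 α ν) : MemS2 α ν := by
  obtain ⟨ν₁, ν₂, k, hL1, hL2, hsum, hdens, ⟨c, C, hc, hcC⟩, hmono1, hmono2, ⟨C₂, hC₂⟩⟩ := hS1
  obtain ⟨δ, hδ0, hk⟩ : ∃ δ > 0, ∀ x : ℝ, x ≠ 0 → |x| < δ → c ≤ k x ∧ k x ≤ C := by
    have := hcC
    rw [Filter.Eventually, Metric.mem_nhdsWithin_iff] at this
    obtain ⟨ε, hε, h⟩ := this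
    refine ⟨ε, hε, fun x hx hxe => h ⟨?_, hx⟩⟩
    simpa [Metric.mem_ball, Real.dist_eq] using hxe
  set D := fun x : ℝ => if x = 0 then 0 else ENNReal.ofReal (k x / |x| ^ (α + 1)) with hD
  set CM := max C 0 with hCM
  have hCM0 : 0 ≤ CM := le_max_right _ _
  have hf : ∀ u : ℝ, Measurable fun x : ℝ => ENNReal.ofReal (1 - Real.cos (u * x)) :=
    fun u => (measurable_const.sub
      (Real.measurable_cos.comp (measurable_id.const_mul u))).ennreal_ofReal
  -- lower bound
  have hge : ∀ s : Set ℝ, MeasurableSet s → s ⊆ Set.Ioo 0 δ →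
      ∫⁻ x in s, ENNReal.ofReal (c * x ^ (-1 - α)) ≤ ν s := by
    intro s hs hsub
    have h1 : ∫⁻ x in s, ENNReal.ofReal (c * x ^ (-1 - α)) ≤ ν₁ s := by
      rw [hdens, withDensity_apply _ hs]
      apply lintegral_mono_ae
      filter_upwards [ae_restrict_mem hs] with x hx
      obtain ⟨hx0, hxδ⟩ := hsub hx
      rw [hD]
      dsimp only
      rw [if_neg (ne_of_gt hx0), abs_of_pos hx0]
      apply ENNReal.ofReal_le_ofReal
      have hxp : (0:ℝ) < x ^ (α+1) := Real.rpow_pos_of_pos hx0 _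
      rw [show (-1-α : ℝ) = -(α+1) by ring, Real.rpow_neg hx0.le, ← div_eq_mul_inv]
      exact (div_le_div_iff_of_pos_right hxp).mpr (hk x (ne_of_gt hx0) (by rwa [abs_of_pos hx0])).1
    refine le_trans h1 ?_
    rw [hsum, Measure.add_apply]
    exact le_self_add
  obtain ⟨c', hc'0, hlow⟩ := lower_piece hα1 hc hδ0 ν hge
  have hGm : Measurable fun y : ℝ => ENNReal.ofReal (CM * y ^ (-1 - α)) :=
    ((measurable_id.pow_const _).const_mul CM).ennreal_ofReal
  have hleP : ∀ s : Set ℝ, MeasurableSet s → s ⊆ Set.Ioo 0 δ →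
      ν₁ s ≤ ∫⁻ x in s, ENNReal.ofReal (CM * x ^ (-1 - α)) := by
    intro s hs hsub
    rw [hdens, withDensity_apply _ hs]
    apply lintegral_mono_ae
    filter_upwards [ae_restrict_mem hs] with x hx
    obtain ⟨hx0, hxδ⟩ := hsub hx
    rw [hD]
    dsimp only
    rw [if_neg (ne_of_gt hx0), abs_of_pos hx0]
    apply ENNReal.ofReal_le_ofReal
    have hxp : (0:ℝ) < x ^ (α+1) := Real.rpow_pos_of_pos hx0 _
    rw [show (-1-α : ℝ) = -(α+1) by ring, Real.rpow_neg hx0.le, ← div_eq_mul_inv]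
    exact (div_le_div_iff_of_pos_right hxp).mpr
      (le_trans (hk x (ne_of_gt hx0) (by rwa [abs_of_pos hx0])).2 (le_max_left _ _))
  obtain ⟨Cp, hCp0, hupP⟩ := upper_piece hα1 hα2 hCM0 hδ0 ν₁ hleP
  set μ' := Measure.map Neg.neg ν₁ with hμ'
  have hleN : ∀ s : Set ℝ, MeasurableSet s → s ⊆ Set.Ioo 0 δ →
      μ' s ≤ ∫⁻ x in s, ENNReal.ofReal (CM * x ^ (-1 - α)) := by
    intro s hs hsub
    have hpre : MeasurableSet (Neg.neg ⁻¹' s : Set ℝ) := hs.preimage measurable_neg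
    rw [hμ', Measure.map_apply measurable_neg hs, hdens, withDensity_apply _ hpre]
    have step : ∫⁻ x in Neg.neg ⁻¹' s, D x ∂volume ≤
        ∫⁻ x in Neg.neg ⁻¹' s, ENNReal.ofReal (CM * (-x) ^ (-1 - α)) ∂volume := by
      apply lintegral_mono_ae
      filter_upwards [ae_restrict_mem hpre] with x hx
      obtain ⟨h1, h2⟩ := hsub hx
      have hx0 : x < 0 := neg_pos.mp h1
      rw [hD]
      dsimp only
      rw [if_neg (ne_of_lt hx0), abs_of_neg hx0]
      apply ENNReal.ofReal_le_ofReal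
      have hxp : (0:ℝ) < (-x) ^ (α+1) := Real.rpow_pos_of_pos h1 _
      rw [show (-1-α : ℝ) = -(α+1) by ring, Real.rpow_neg h1.le, ← div_eq_mul_inv]
      refine (div_le_div_iff_of_pos_right hxp).mpr (le_trans (hk x (ne_of_lt hx0) ?_).2 (le_max_left _ _))
      rw [abs_of_neg hx0]
      exact h2
    refine le_trans step (le_of_eq ?_)
    have h := lintegral_map_neg (μ := volume) hGm hs
    rw [Measure.map_neg_eq_self (volume : Measure ℝ)] at h
    exact h.symm
  obtain ⟨Cn, hCn0, hupN⟩ := upper_piece hα1 hα2 hCM0 hδ0 μ' hleN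
  have hnegside : ∀ u : ℝ,
      ∫⁻ x in Set.Ioo (-δ) 0, ENNReal.ofReal (1 - Real.cos (u*x)) ∂ν₁
        = ∫⁻ x in Set.Ioo 0 δ, ENNReal.ofReal (1 - Real.cos (u*x)) ∂μ' := by
    intro u
    rw [hμ', lintegral_map_neg ν₁ (hf u) measurableSet_Ioo]
    have hset : (Neg.neg ⁻¹' Set.Ioo 0 δ : Set ℝ) = Set.Ioo (-δ) 0 := by
      ext x
      simp only [Set.mem_preimage, Set.mem_Ioo]
      constructor <;> intro h <;> exact ⟨by linarith [h.1, h.2], by linarith [h.1, h.2]⟩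
    rw [hset]
    simp only [mul_neg, Real.cos_neg]
  have hK : ν₁ (Set.Ioo (-δ) δ)ᶜ ≠ ⊤ := levy_tail hL1 hδ0
  set K := ν₁ (Set.Ioo (-δ) δ)ᶜ with hKdef
  have htail : ∀ u : ℝ,
      ∫⁻ x in (Set.Ioo (-δ) δ)ᶜ, ENNReal.ofReal (1 - Real.cos (u*x)) ∂ν₁ ≤ 2 * K := by
    intro u
    calc ∫⁻ x in (Set.Ioo (-δ) δ)ᶜ, ENNReal.ofReal (1 - Real.cos (u*x)) ∂ν₁
        ≤ ∫⁻ _ in (Set.Ioo (-δ) δ)ᶜ, (2:ℝ≥0∞) ∂ν₁ := by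
          apply lintegral_mono_ae
          apply ae_of_all
          intro x
          calc ENNReal.ofReal (1 - Real.cos (u*x)) ≤ ENNReal.ofReal 2 :=
                ENNReal.ofReal_le_ofReal (by linarith [Real.neg_one_le_cos (u*x)])
            _ = 2 := by norm_num
      _ = 2 * K := setLIntegral_const _ _
  set M0 := max 1 δ⁻¹ with hM0
  have hsplit : ∀ u : ℝ, M0 ≤ |u| → cosInt ν₁ u ≤
      ENNReal.ofReal (Cn * |u|^α) + ENNReal.ofReal (Cp * |u|^α) + 2*K := by
    intro u hu
    show (∫⁻ x, ENNReal.ofReal (1 - Real.cos (u*x)) ∂ν₁) ≤ _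
    rw [← lintegral_add_compl (fun x => ENNReal.ofReal (1 - Real.cos (u*x)))
      (measurableSet_Ioo (a := -δ) (b := δ))]
    have hin : ∫⁻ x in Set.Ioo (-δ) δ, ENNReal.ofReal (1 - Real.cos (u*x)) ∂ν₁ ≤
        ENNReal.ofReal (Cn * |u|^α) + ENNReal.ofReal (Cp * |u|^α) := by
      calc ∫⁻ x in Set.Ioo (-δ) δ, ENNReal.ofReal (1 - Real.cos (u*x)) ∂ν₁
          ≤ ∫⁻ x in (Set.Ioo (-δ) 0 ∪ Set.Ioo 0 δ) ∪ {0},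
              ENNReal.ofReal (1 - Real.cos (u*x)) ∂ν₁ := by
            apply lintegral_mono_set
            intro x hx
            rcases lt_trichotomy x 0 with h|h|h
            · exact Or.inl (Or.inl ⟨hx.1, h⟩)
            · exact Or.inr (by simp [h])
            · exact Or.inl (Or.inr ⟨h, hx.2⟩)
        _ ≤ (∫⁻ x in Set.Ioo (-δ) 0 ∪ Set.Ioo 0 δ,
              ENNReal.ofReal (1 - Real.cos (u*x)) ∂ν₁) +
            ∫⁻ x in ({0} : Set ℝ), ENNReal.ofReal (1 - Real.cos (u*x)) ∂ν₁ :=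
            lintegral_union_le _ _ _
        _ ≤ ((∫⁻ x in Set.Ioo (-δ) 0, ENNReal.ofReal (1 - Real.cos (u*x)) ∂ν₁) +
            ∫⁻ x in Set.Ioo 0 δ, ENNReal.ofReal (1 - Real.cos (u*x)) ∂ν₁) + 0 := by
            apply add_le_add (lintegral_union_le _ _ _)
            rw [Measure.restrict_eq_zero.mpr hL1.1]
            simp
        _ ≤ ENNReal.ofReal (Cn * |u|^α) + ENNReal.ofReal (Cp * |u|^α) := by
            rw [add_zero, hnegside u]
            exact add_le_add (hupN u hu) (hupP u hu)
    exact add_le_add hin (htail u)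
  refine memS2_of_bounds ⟨c', hc'0, eventually_absAtTop _ hlow⟩ ?_
  refine ⟨ENNReal.ofReal Cn + ENNReal.ofReal Cp + 2*K + ENNReal.ofReal (max C₂ 0), ?_, ?_⟩
  · intro htop
    have h2K : (2:ℝ≥0∞)*K ≠ ⊤ := ENNReal.mul_ne_top (by norm_num) hK
    simp [ENNReal.add_eq_top, ENNReal.ofReal_ne_top, h2K] at htop
  · filter_upwards [hC₂, eventually_absAtTop M0 (fun u h => h)] with u h2 hM
    have hu1 : (1:ℝ) ≤ |u| := le_trans (le_max_left _ _) hM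
    set b := ENNReal.ofReal (|u|^α) with hb
    have hb1 : (1:ℝ≥0∞) ≤ b := ENNReal.one_le_ofReal.mpr (Real.one_le_rpow hu1 hα1.le)
    have hsum' : cosInt ν u = cosInt ν₁ u + cosInt ν₂ u := by
      show (∫⁻ x, ENNReal.ofReal (1 - Real.cos (u*x)) ∂ν) = _
      rw [hsum]
      exact lintegral_add_measure _ _ _
    rw [hsum']
    calc cosInt ν₁ u + cosInt ν₂ u
        ≤ (ENNReal.ofReal (Cn * |u|^α) + ENNReal.ofReal (Cp * |u|^α) + 2*K) +
            ENNReal.ofReal (C₂ * |u|^α) := add_le_add (hsplit u hM) h2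
      _ ≤ (ENNReal.ofReal Cn * b + ENNReal.ofReal Cp * b + 2*K*b) +
            ENNReal.ofReal (max C₂ 0) * b := by
          apply add_le_add
          · rw [ENNReal.ofReal_mul hCn0.le, ENNReal.ofReal_mul hCp0.le]
            apply add_le_add le_rfl
            nth_rewrite 1 [← mul_one (2*K)]
            exact mul_le_mul_right hb1 _
          · rw [← ENNReal.ofReal_mul (le_max_right C₂ 0)]
            exact ENNReal.ofReal_le_ofReal
              (mul_le_mul_of_nonneg_right (le_max_left _ _)
                (Real.rpow_nonneg (abs_nonneg u) α))
      _ = (ENNReal.ofReal Cn + ENNReal.ofReal Cp + 2*K + ENNReal.ofReal (max C₂ 0)) * b := by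
          ring

lemma part2 {α : ℝ} (hα1 : 0 < α) (hα2 : α < 2) :
    MemS2 α (volume.withDensity
      ((Set.Ioo (0 : ℝ) 1).indicator fun x => ENNReal.ofReal (x ^ (-1 - α)))) := by
  set g := (Set.Ioo (0 : ℝ) 1).indicator fun x => ENNReal.ofReal (x ^ (-1 - α)) with hg
  set ν₀ := volume.withDensity g with hν₀
  have hcong : ∀ s : Set ℝ, MeasurableSet s → s ⊆ Set.Ioo 0 1 →
      ν₀ s = ∫⁻ x in s, ENNReal.ofReal (1 * x ^ (-1 - α)) := by
    intro s hs hsub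
    rw [hν₀, withDensity_apply _ hs]
    apply lintegral_congr_ae
    filter_upwards [ae_restrict_mem hs] with x hx
    rw [hg, Set.indicator_of_mem (hsub hx), one_mul]
  obtain ⟨c', hc'0, hlow⟩ := lower_piece hα1 one_pos one_pos ν₀
    (fun s hs hsub => le_of_eq (hcong s hs hsub).symm)
  obtain ⟨C', hC'0, hupp⟩ := upper_piece hα1 hα2 zero_le_one one_pos ν₀
    (fun s hs hsub => le_of_eq (hcong s hs hsub))
  have hout : ν₀ ((Set.Ioo (0:ℝ) 1)ᶜ) = 0 := by
    rw [hν₀, withDensity_apply _ measurableSet_Ioo.compl]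
    have h0 : ∀ᵐ x ∂(volume.restrict (Set.Ioo (0:ℝ) 1)ᶜ), g x = 0 := by
      filter_upwards [ae_restrict_mem measurableSet_Ioo.compl] with x hx
      exact Set.indicator_of_notMem hx _
    rw [lintegral_congr_ae h0]
    simp
  have hup' : ∀ u : ℝ, max 1 (1:ℝ)⁻¹ ≤ |u| →
      cosInt ν₀ u ≤ ENNReal.ofReal C' * ENNReal.ofReal (|u|^α) := by
    intro u hu
    show (∫⁻ x, ENNReal.ofReal (1 - Real.cos (u * x)) ∂ν₀) ≤ _
    rw [← lintegral_add_compl (fun x => ENNReal.ofReal (1 - Real.cos (u*x)))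
      (measurableSet_Ioo (a := (0:ℝ)) (b := 1))]
    have h2 : ∫⁻ x in (Set.Ioo (0:ℝ) 1)ᶜ, ENNReal.ofReal (1 - Real.cos (u*x)) ∂ν₀ = 0 := by
      rw [Measure.restrict_eq_zero.mpr hout]
      simp
    rw [h2, add_zero, ← ENNReal.ofReal_mul hC'0.le]
    exact hupp u hu
  exact memS2_of_bounds ⟨c', hc'0, eventually_absAtTop _ hlow⟩
    ⟨ENNReal.ofReal C', ENNReal.ofReal_ne_top, eventually_absAtTop _ hup'⟩

lemma part3 {α : ℝ} (hα1 : 0 < α)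
    (hS1 : MemS1 α (volume.withDensity
      ((Set.Ioo (0 : ℝ) 1).indicator fun x => ENNReal.ofReal (x ^ (-1 - α))))) : False := by
  obtain ⟨ν₁, ν₂, k, hL1, hL2, hsum, hdens, ⟨c, C, hc, hcC⟩, -, -, -⟩ := hS1
  obtain ⟨δ, hδ0, hk⟩ : ∃ δ > 0, ∀ x : ℝ, x ≠ 0 → |x| < δ → c ≤ k x ∧ k x ≤ C := by
    have h := hcC
    rw [Filter.Eventually, Metric.mem_nhdsWithin_iff] at h
    obtain ⟨ε, hε, h⟩ := h
    refine ⟨ε, hε, fun x hx hxe => h ⟨?_, hx⟩⟩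
    simpa [Metric.mem_ball, Real.dist_eq] using hxe
  set s := Set.Ioo (-(δ/2)) (-(δ/4)) with hsdef
  have hneg : ∀ x ∈ s, x < 0 ∧ x ≠ 0 ∧ |x| < δ := by
    intro x hx
    obtain ⟨h1, h2⟩ := hx
    have hx0 : x < 0 := by linarith
    refine ⟨hx0, ne_of_lt hx0, ?_⟩
    rw [abs_of_neg hx0]
    linarith
  have hνs : (volume.withDensity
      ((Set.Ioo (0 : ℝ) 1).indicator fun x => ENNReal.ofReal (x ^ (-1 - α)))) s = 0 := by
    rw [withDensity_apply _ measurableSet_Ioo]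
    have h0 : ∀ᵐ x ∂(volume.restrict s),
        (Set.Ioo (0 : ℝ) 1).indicator (fun x => ENNReal.ofReal (x ^ (-1 - α))) x = 0 := by
      filter_upwards [ae_restrict_mem measurableSet_Ioo] with x hx
      have := (hneg x hx).1
      exact Set.indicator_of_notMem (fun hmem => absurd hmem.1 (by linarith)) _
    rw [lintegral_congr_ae h0]
    simp
  have hν₁s : ν₁ s = 0 := by
    have h := congrArg (fun m : Measure ℝ => m s) hsum
    simp only [Measure.add_apply] at h
    rw [hνs] at h
    exact (add_eq_zero.mp h.symm).1
  have hpos : 0 < ν₁ s := by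
    rw [hdens, withDensity_apply _ measurableSet_Ioo]
    have hlow : ∫⁻ _ in s, ENNReal.ofReal (c / δ^(α+1)) ∂volume ≤
        ∫⁻ x in s, (if x = 0 then 0 else ENNReal.ofReal (k x / |x| ^ (α + 1))) ∂volume := by
      apply lintegral_mono_ae
      filter_upwards [ae_restrict_mem measurableSet_Ioo] with x hx
      obtain ⟨hx0, hxne, hxδ⟩ := hneg x hx
      rw [if_neg hxne]
      apply ENNReal.ofReal_le_ofReal
      have hkx := hk x hxne hxδ
      have hxp : (0:ℝ) < |x| ^ (α+1) := Real.rpow_pos_of_pos (abs_pos.mpr hxne) _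
      have hxd : |x| ^ (α+1) ≤ δ ^ (α+1) :=
        Real.rpow_le_rpow (abs_nonneg x) hxδ.le (by linarith)
      exact div_le_div₀ (le_trans hc.le hkx.1) hkx.1 hxp hxd
    refine lt_of_lt_of_le ?_ hlow
    rw [setLIntegral_const]
    apply ENNReal.mul_pos
    · rw [Ne, ENNReal.ofReal_eq_zero, not_le]
      positivity
    · rw [hsdef, Real.volume_Ioo]
      rw [Ne, ENNReal.ofReal_eq_zero, not_le]
      linarith
  exact hpos.ne' hν₁s

/-- `𝒮₁(α) ⊆ 𝒮₂(α)` (among Lévy measures), the inclusion being strict: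
the one-sided measure `x^{-1-α} 𝟙_{(0,1)}(x) dx` is in `𝒮₂(α)` but not in `𝒮₁(α)`. -/
theorem stmt4 (α : ℝ) (hα : α ∈ Set.Ioo (0 : ℝ) 2) :
    (∀ ν : Measure ℝ, IsLevyMeasure ν → MemS1 α ν → MemS2 α ν) ∧
    MemS2 α (volume.withDensity
      ((Set.Ioo (0 : ℝ) 1).indicator fun x => ENNReal.ofReal (x ^ (-1 - α)))) ∧
    ¬ MemS1 α (volume.withDensity
      ((Set.Ioo (0 : ℝ) 1).indicator fun x => ENNReal.ofReal (x ^ (-1 - α)))) := by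
  obtain ⟨hα1, hα2⟩ := hα
  exact ⟨fun ν _ h => part1 hα1 hα2 ν h, part2 hα1 hα2, fun h => part3 hα1 h⟩
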